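/- Let A be a Banach algebra, D a subalgebra of A with σ(D) ⊆ D and d(D) ⊆ D, and let σ, d : D → D be linear maps such that d is a σ-derivation. Then for every natural number n ≥ 1 and all a, b ∈ D, dⁿ(ab) = Σ_{k=0}^{2ⁿ−1} φ_{n,k}(a) · φ_{n, 2ⁿ−1−k}(b), where dⁿ is the n-fold iterate of d. -/

import Mathlib

/-- `phi σ d n k` is the composition `g_{n−1} ∘ ⋯ ∘ g_0` where `g_i = d` if the
`i`-th binary digit of `k` is `1` and `g_i = σ` otherwise. -/
def phi {A : Type*} (σ d : A → A) : ℕ → ℕ → A → A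
  | 0, _ => id
  | n + 1, k => (if Nat.testBit k n then d else σ) ∘ phi σ d n k

lemma phi_mod {A : Type*} (σ d : A → A) : ∀ n k, phi σ d n (k % 2 ^ n) = phi σ d n k := by
  intro n
  induction n with
  | zero => intro k; rfl
  | succ n ih =>
      intro k
      have h1 : k % 2 ^ (n + 1) % 2 ^ n = k % 2 ^ n :=
        Nat.mod_mod_of_dvd _ (pow_dvd_pow 2 n.le_succ)
      have h2 : phi σ d n (k % 2 ^ (n + 1)) = phi σ d n k := by
        rw [← ih (k % 2 ^ (n + 1)), h1, ih]
      show (if Nat.testBit (k % 2 ^ (n + 1)) n then d else σ) ∘ phi σ d n (k % 2 ^ (n + 1))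
          = (if Nat.testBit k n then d else σ) ∘ phi σ d n k
      rw [h2, Nat.testBit_mod_two_pow]
      simp

lemma phi_two_pow_add {A : Type*} (σ d : A → A) (n j : ℕ) :
    phi σ d n (2 ^ n + j) = phi σ d n j := by
  rw [← phi_mod σ d n (2 ^ n + j), Nat.add_mod_left, phi_mod]

theorem stmt_11 {A : Type*} [NormedRing A] [NormedAlgebra ℝ A] [CompleteSpace A]
    (D : Subalgebra ℝ A) (σ d : D →ₗ[ℝ] D)
    (hder : ∀ a b : D, d (a * b) = d a * σ b + σ a * d b) :
    ∀ (n : ℕ), 1 ≤ n → ∀ a b : D,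
      (⇑d)^[n] (a * b)
        = ∑ k ∈ Finset.range (2 ^ n),
            phi (⇑σ) (⇑d) n k a * phi (⇑σ) (⇑d) n (2 ^ n - 1 - k) b := by
  have main : ∀ (n : ℕ), ∀ a b : D,
      (⇑d)^[n] (a * b)
        = ∑ k ∈ Finset.range (2 ^ n),
            phi (⇑σ) (⇑d) n k a * phi (⇑σ) (⇑d) n (2 ^ n - 1 - k) b := by
    intro n
    induction n with
    | zero => intro a b; simp [phi]
    | succ n ih =>
        intro a b
        have hpow : (2 : ℕ) ^ (n + 1) = 2 ^ n + 2 ^ n := by ring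
        rw [Function.iterate_succ_apply', ih, map_sum]
        have step : ∀ k ∈ Finset.range (2 ^ n),
            d (phi (⇑σ) (⇑d) n k a * phi (⇑σ) (⇑d) n (2 ^ n - 1 - k) b)
              = d (phi (⇑σ) (⇑d) n k a) * σ (phi (⇑σ) (⇑d) n (2 ^ n - 1 - k) b)
                + σ (phi (⇑σ) (⇑d) n k a) * d (phi (⇑σ) (⇑d) n (2 ^ n - 1 - k) b) := by
          intro k _
          exact hder _ _
        rw [Finset.sum_congr rfl step, Finset.sum_add_distrib]
        rw [hpow, Finset.sum_range_add]
        have hL : ∀ k ∈ Finset.range (2 ^ n),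
            phi (⇑σ) (⇑d) (n + 1) k a * phi (⇑σ) (⇑d) (n + 1) (2 ^ n + 2 ^ n - 1 - k) b
              = σ (phi (⇑σ) (⇑d) n k a) * d (phi (⇑σ) (⇑d) n (2 ^ n - 1 - k) b) := by
          intro k hk
          rw [Finset.mem_range] at hk
          have hk' : Nat.testBit k n = false := Nat.testBit_lt_two_pow hk
          have hm : 2 ^ n + 2 ^ n - 1 - k = 2 ^ n + (2 ^ n - 1 - k) := by omega
          have hjlt : 2 ^ n - 1 - k < 2 ^ n := by
            have : 0 < (2:ℕ) ^ n := Nat.pow_pos (n := n) (by norm_num)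
            omega
          have hbit : Nat.testBit (2 ^ n + (2 ^ n - 1 - k)) n = true := by
            rw [Nat.testBit_eq_decide_div_mod_eq]
            have h1 : (2 ^ n + (2 ^ n - 1 - k)) / 2 ^ n = 1 := by
              rw [Nat.add_comm, Nat.add_div_right _ (Nat.pow_pos (n := n) (by norm_num)),
                Nat.div_eq_of_lt hjlt]
            simp [h1]
          show (if Nat.testBit k n then ⇑d else ⇑σ) (phi (⇑σ) (⇑d) n k a)
              * (if Nat.testBit (2 ^ n + 2 ^ n - 1 - k) n then ⇑d else ⇑σ)
                  (phi (⇑σ) (⇑d) n (2 ^ n + 2 ^ n - 1 - k) b)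
              = _
          rw [hk', hm, hbit, phi_two_pow_add]
          simp
        have hR : ∀ j ∈ Finset.range (2 ^ n),
            phi (⇑σ) (⇑d) (n + 1) (2 ^ n + j) a
              * phi (⇑σ) (⇑d) (n + 1) (2 ^ n + 2 ^ n - 1 - (2 ^ n + j)) b
              = d (phi (⇑σ) (⇑d) n j a) * σ (phi (⇑σ) (⇑d) n (2 ^ n - 1 - j) b) := by
          intro j hj
          rw [Finset.mem_range] at hj
          have hbit : Nat.testBit (2 ^ n + j) n = true := by
            rw [Nat.testBit_eq_decide_div_mod_eq]
            have h1 : (2 ^ n + j) / 2 ^ n = 1 := by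
              rw [Nat.add_comm, Nat.add_div_right _ (Nat.pow_pos (n := n) (by norm_num)),
                Nat.div_eq_of_lt hj]
            simp [h1]
          have hm : 2 ^ n + 2 ^ n - 1 - (2 ^ n + j) = 2 ^ n - 1 - j := by omega
          have hlt : 2 ^ n - 1 - j < 2 ^ n := by
            have : 0 < (2:ℕ) ^ n := Nat.pow_pos (n := n) (by norm_num)
            omega
          have hbit2 : Nat.testBit (2 ^ n - 1 - j) n = false := Nat.testBit_lt_two_pow hlt
          show (if Nat.testBit (2 ^ n + j) n then ⇑d else ⇑σ) (phi (⇑σ) (⇑d) n (2 ^ n + j) a)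
              * (if Nat.testBit (2 ^ n + 2 ^ n - 1 - (2 ^ n + j)) n then ⇑d else ⇑σ)
                  (phi (⇑σ) (⇑d) n (2 ^ n + 2 ^ n - 1 - (2 ^ n + j)) b)
              = _
          rw [hbit, hm, hbit2, phi_two_pow_add]
          simp
        rw [Finset.sum_congr rfl hL, Finset.sum_congr rfl hR, add_comm]
  intro n _ a b
  exact main n a b
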